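/- For all complex numbers w and v with w ≠ 0 and w + v ≠ 0, the angular displacement between w + v and w is at most π|v|/|w|; that is, |Arg((w + v)/w)| ≤ π·|v|/|w|, where Arg denotes the principal argument taking values in (−π, π]. -/

import Mathlib

lemma key8 (z : ℂ) (hu : (1:ℂ) + z ≠ 0) :
    |Complex.arg (1 + z)| ≤ Real.pi * ‖z‖ := by
  set a := ‖z‖ with ha
  set θ := Complex.arg (1 + z) with hθ
  have ha0 : 0 ≤ a := norm_nonneg z
  have pi_pos := Real.pi_pos
  by_cases h1 : 1 ≤ a
  · calc |θ| ≤ Real.pi := Complex.abs_arg_le_pi _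
      _ ≤ Real.pi * a := by nlinarith
  push_neg at h1
  have hre : 0 ≤ (1 + z).re := by
    have := Complex.abs_re_le_norm z
    simp only [Complex.add_re, Complex.one_re]
    rcases abs_le.mp this with ⟨h, _⟩; linarith
  have hle : |θ| ≤ Real.pi / 2 := Complex.abs_arg_le_pi_div_two_iff.mpr hre
  by_cases h2 : 1/2 ≤ a
  · calc |θ| ≤ Real.pi / 2 := hle
      _ ≤ Real.pi * a := by nlinarith
  push_neg at h2
  have habs : 0 < ‖1 + z‖ := norm_pos_iff.mpr hu
  have hlow : 1 - a ≤ ‖1 + z‖ := by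
    have h := norm_add_le (1 + z) (-z)
    simp at h
    linarith
  have him : |(1 + z).im| ≤ a := by
    have : (1 + z).im = z.im := by simp
    rw [this]; exact Complex.abs_im_le_norm z
  have hsinθ : Real.sin θ = (1 + z).im / ‖1 + z‖ := Complex.sin_arg _
  have hsinabs : Real.sin |θ| = |Real.sin θ| := by
    rcases abs_cases θ with ⟨h, h'⟩ | ⟨h, h'⟩
    · rw [h, abs_of_nonneg]
      exact Real.sin_nonneg_of_nonneg_of_le_pi h' (by linarith [hle, abs_of_nonneg h' ▸ hle])
    · rw [h, Real.sin_neg, abs_of_nonpos]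
      exact Real.sin_nonpos_of_nonpos_of_neg_pi_le (le_of_lt h') (by linarith [abs_le.mp (Complex.abs_arg_le_pi (1+z))])
  have hjordan : 2 / Real.pi * |θ| ≤ Real.sin |θ| :=
    Real.mul_le_sin (abs_nonneg _) hle
  have hbound : |Real.sin θ| ≤ a / (1 - a) := by
    rw [hsinθ, abs_div, abs_of_pos habs]
    apply div_le_div₀ ha0 him (by linarith) hlow
  have h3 : 2 / Real.pi * |θ| ≤ a / (1 - a) := by
    rw [hsinabs] at hjordan; linarith
  have h4 : a / (1 - a) ≤ 2 * a := by
    rw [div_le_iff₀ (by linarith)]; nlinarith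
  have h5 : 2 / Real.pi * |θ| ≤ 2 * a := le_trans h3 h4
  rw [div_mul_eq_mul_div, div_le_iff₀ pi_pos] at h5
  nlinarith

theorem stmt8 (w v : ℂ) (hw : w ≠ 0) (hwv : w + v ≠ 0) :
    |Complex.arg ((w + v) / w)| ≤ Real.pi * ‖v‖ / ‖w‖ := by
  have h1 : (w + v) / w = 1 + v / w := by field_simp
  have h2 : ‖v / w‖ = ‖v‖ / ‖w‖ := norm_div _ _
  have hu : (1 : ℂ) + v / w ≠ 0 := by
    rw [← h1]; exact div_ne_zero hwv hw
  have := key8 (v / w) hu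
  rw [h1, mul_div_assoc, ← h2]
  exact this
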